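/- Fix a horizon T ∈ ℕ with T ≥ 1, d ∈ ℕ with d ≥ 1, reals α ≥ 0, C_x > 0, β ≥ max{1, C_x²}, Δ_max ≥ 0, and μ ∈ (0, 1). Suppose the frames {1, …, T} are partitioned into three disjoint sets R (regular sampling), N (non-sampling), and F (forced sampling); let M = |R ∪ F| ≤ T and let the sampling frames, listed in increasing order, have feature vectors x₁, …, x_M ∈ ℝ^d with ‖x_m‖₂ ≤ C_x, and set A₀ = β I_d, A_m = A_{m−1} + x_m x_mᵀ. Suppose the per-frame regrets r_t ≥ 0 satisfy: (i) for each t ∈ R with sampling index m, r_t ≤ 2α√(x_mᵀ A_{m−1}⁻¹ x_m); (ii) there is a map σ : N → {1, …, M} with |σ⁻¹(m)| ≤ T^μ for every m, and r_t ≤ 3α√(x_{σ(t)}ᵀ A_{σ(t)−1}⁻¹ x_{σ(t)}) for each t ∈ N; (iii) r_t ≤ Δ_max for each t ∈ F and |F| ≤ T^{1−μ}. Then the total regret satisfies Σ_{t=1}^T r_t ≤ (2 + 3T^μ) · α√(2Td(log(β + T C_x²/d) − log β)) + T^{1−μ} Δ_max. -/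

import Mathlib

open Matrix

/-- The design matrix after `m` samples: `A_m = βI_d + Σ_{s<m} x_s x_sᵀ`
(so `A_0 = βI_d` and `A_m = A_{m-1} + x_{m-1} x_{m-1}ᵀ`). -/
noncomputable def designMatrix {d : ℕ} (β : ℝ) (x : ℕ → Fin d → ℝ) (m : ℕ) :
    Matrix (Fin d) (Fin d) ℝ :=
  β • (1 : Matrix (Fin d) (Fin d) ℝ) + ∑ s ∈ Finset.range m, vecMulVec (x s) (x s)

lemma sum_mulVec' {d : ℕ} {ι : Type*} (F : Finset ι) (M : ι → Matrix (Fin d) (Fin d) ℝ)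
    (v : Fin d → ℝ) : (∑ s ∈ F, M s) *ᵥ v = ∑ s ∈ F, (M s) *ᵥ v := by
  ext i
  simp only [mulVec, dotProduct, Matrix.sum_apply, Finset.sum_apply, Finset.sum_mul]
  exact Finset.sum_comm

lemma vecMulVec_mulVec' {d : ℕ} (u w v : Fin d → ℝ) :
    vecMulVec u w *ᵥ v = (w ⬝ᵥ v) • u := by
  ext i
  simp only [mulVec, dotProduct, vecMulVec_apply, Pi.smul_apply, smul_eq_mul, Finset.sum_mul]
  exact Finset.sum_congr rfl fun j _ => by ring

lemma dotProduct_sum' {d : ℕ} {ι : Type*} (F : Finset ι) (v : Fin d → ℝ) (f : ι → Fin d → ℝ) :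
    v ⬝ᵥ (∑ s ∈ F, f s) = ∑ s ∈ F, v ⬝ᵥ f s := by
  simp only [dotProduct, Finset.sum_apply, Finset.mul_sum]
  exact Finset.sum_comm

lemma quad {d : ℕ} (β : ℝ) (x : ℕ → Fin d → ℝ) (m : ℕ) (v : Fin d → ℝ) :
    v ⬝ᵥ (designMatrix β x m) *ᵥ v = β * (v ⬝ᵥ v) + ∑ s ∈ Finset.range m, (x s ⬝ᵥ v)^2 := by
  rw [designMatrix, add_mulVec, dotProduct_add, sum_mulVec', dotProduct_sum',
    smul_mulVec, one_mulVec, dotProduct_smul]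
  congr 1
  exact Finset.sum_congr rfl fun s _ => by
    rw [vecMulVec_mulVec', dotProduct_smul, smul_eq_mul, sq, dotProduct_comm (x s) v]

lemma herm {d : ℕ} (β : ℝ) (x : ℕ → Fin d → ℝ) (m : ℕ) :
    (designMatrix β x m).IsHermitian := by
  unfold Matrix.IsHermitian
  ext i j
  simp [designMatrix, Matrix.conjTranspose_apply, Matrix.sum_apply, vecMulVec_apply,
    Matrix.one_apply, mul_comm, eq_comm]

lemma pd {d : ℕ} {β : ℝ} (hβ : 0 < β) (x : ℕ → Fin d → ℝ) (m : ℕ) :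
    (designMatrix β x m).PosDef := by
  refine .of_dotProduct_mulVec_pos (herm β x m) fun v hv => ?_
  have hsv : star v = v := by simp
  rw [hsv, quad]
  have h1 : 0 < v ⬝ᵥ v :=
    lt_of_le_of_ne (Finset.sum_nonneg fun i _ => mul_self_nonneg _)
      (Ne.symm (fun h => hv (dotProduct_self_eq_zero.mp h)))
  have h2 : (0:ℝ) ≤ ∑ s ∈ Finset.range m, (x s ⬝ᵥ v)^2 :=
    Finset.sum_nonneg fun s _ => sq_nonneg _
  positivity

lemma det_rec {d : ℕ} {β : ℝ} (hβ : 0 < β) (x : ℕ → Fin d → ℝ) (m : ℕ) :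
    (designMatrix β x (m+1)).det
      = (designMatrix β x m).det * (1 + x m ⬝ᵥ (designMatrix β x m)⁻¹ *ᵥ x m) := by
  have hA : (designMatrix β x m).det ≠ 0 := ne_of_gt (pd hβ x m).det_pos
  have h1 : designMatrix β x (m+1) = designMatrix β x m + replicateCol Unit (x m) * replicateRow Unit (x m) := by
    rw [← vecMulVec_eq, designMatrix, designMatrix, Finset.sum_range_succ, add_assoc]
  rw [h1, det_add_replicateCol_mul_replicateRow (isUnit_iff_ne_zero.mpr hA),
    Matrix.det_unique (1 + replicateRow Unit (x m) * (designMatrix β x m)⁻¹ * replicateCol Unit (x m))]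
  congr 1
  rw [Matrix.add_apply, Matrix.one_apply_eq, ← Matrix.replicateRow_vecMul,
    Matrix.replicateRow_mul_replicateCol_apply, dotProduct_mulVec]

lemma w_nonneg {d : ℕ} {β : ℝ} (hβ : 0 < β) (x : ℕ → Fin d → ℝ) (m : ℕ) :
    0 ≤ x m ⬝ᵥ (designMatrix β x m)⁻¹ *ᵥ x m := by
  have := ((pd hβ x m).inv).posSemidef.dotProduct_mulVec_nonneg (x m)
  simpa using this

lemma w_le_one {d : ℕ} {β Cx : ℝ} (hβ1 : 1 ≤ β) (hβC : Cx^2 ≤ β) (x : ℕ → Fin d → ℝ) (m : ℕ)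
    (hxm : x m ⬝ᵥ x m ≤ Cx^2) :
    x m ⬝ᵥ (designMatrix β x m)⁻¹ *ᵥ x m ≤ 1 := by
  have hβ : (0:ℝ) < β := lt_of_lt_of_le one_pos hβ1
  set A := designMatrix β x m with hA
  set y := A⁻¹ *ᵥ x m with hy
  have hAy : A *ᵥ y = x m := by
    rw [hy, Matrix.mulVec_mulVec, Matrix.mul_nonsing_inv _ (isUnit_iff_ne_zero.mpr
      (ne_of_gt (pd hβ x m).det_pos)), Matrix.one_mulVec]
  have hquad : x m ⬝ᵥ y = β * (y ⬝ᵥ y) + ∑ s ∈ Finset.range m, (x s ⬝ᵥ y)^2 := by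
    rw [← hAy, dotProduct_comm (A *ᵥ y) y]  -- careful direction
    exact quad β x m y
  have hlow : β * (y ⬝ᵥ y) ≤ x m ⬝ᵥ y := by
    rw [hquad]
    have : (0:ℝ) ≤ ∑ s ∈ Finset.range m, (x s ⬝ᵥ y)^2 :=
      Finset.sum_nonneg fun s _ => sq_nonneg _
    linarith
  have hcs : (x m ⬝ᵥ y)^2 ≤ (x m ⬝ᵥ x m) * (y ⬝ᵥ y) := by
    have := Finset.sum_mul_sq_le_sq_mul_sq Finset.univ (x m) y
    simpa [dotProduct, sq, Finset.sum_mul_sq_le_sq_mul_sq] using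
      (by simpa [sq] using this : (∑ i, x m i * y i)^2 ≤ (∑ i, x m i * x m i) * ∑ i, y i * y i)
  have hw0 : 0 ≤ x m ⬝ᵥ y := w_nonneg hβ x m
  have hyy : 0 ≤ y ⬝ᵥ y := Finset.sum_nonneg fun i _ => mul_self_nonneg _
  nlinarith [sq_nonneg (x m ⬝ᵥ y), mul_nonneg hw0 hw0]

lemma half_le_log {w : ℝ} (h0 : 0 ≤ w) (h1 : w ≤ 1) : w ≤ 2 * Real.log (1 + w) := by
  have h2 : Real.exp (w/2) ≤ 1 + w := by
    have ha := Real.add_one_le_exp (-(w/2))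
    have hb : Real.exp (-(w/2)) * Real.exp (w/2) = 1 := by
      rw [← Real.exp_add]; simp
    nlinarith [Real.exp_pos (w/2)]
  have h3 : w/2 ≤ Real.log (1 + w) :=
    (Real.le_log_iff_exp_le (by linarith)).mpr h2
  linarith

lemma logdet_eq {d : ℕ} {β : ℝ} (hβ : 0 < β) (x : ℕ → Fin d → ℝ) (M : ℕ) :
    Real.log (designMatrix β x M).det
      = d * Real.log β
        + ∑ m ∈ Finset.range M, Real.log (1 + x m ⬝ᵥ (designMatrix β x m)⁻¹ *ᵥ x m) := by
  induction M with
  | zero =>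
      simp [designMatrix, Matrix.det_smul, Real.log_pow]
  | succ M ih =>
      rw [det_rec hβ x M, Real.log_mul (ne_of_gt (pd hβ x M).det_pos)
        (by have := w_nonneg hβ x M; positivity), ih, Finset.sum_range_succ]
      ring

lemma trace_eq {d : ℕ} (β : ℝ) (x : ℕ → Fin d → ℝ) (M : ℕ) :
    (designMatrix β x M).trace = β * d + ∑ s ∈ Finset.range M, (x s ⬝ᵥ x s) := by
  rw [designMatrix, Matrix.trace_add, Matrix.trace_smul, Matrix.trace_one, Matrix.trace_sum]
  simp only [smul_eq_mul, Fintype.card_fin]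
  have : ∀ s : ℕ, (vecMulVec (x s) (x s)).trace = x s ⬝ᵥ x s := fun s => by
    simp [Matrix.trace, Matrix.diag, vecMulVec_apply, dotProduct]
  simp only [this]


lemma trace_eq_sum_eigs {d : ℕ} {H : Matrix (Fin d) (Fin d) ℝ} (hH : H.IsHermitian) :
    H.trace = ∑ i, hH.eigenvalues i := by
  simpa using hH.trace_eq_sum_eigenvalues

lemma det_eq_prod_eigs {d : ℕ} {H : Matrix (Fin d) (Fin d) ℝ} (hH : H.IsHermitian) :
    H.det = ∏ i, hH.eigenvalues i := by
  simpa using hH.det_eq_prod_eigenvalues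

lemma logdet_le_trace {d : ℕ} (hd : 1 ≤ d) {H : Matrix (Fin d) (Fin d) ℝ} (hH : H.PosDef) :
    Real.log H.det ≤ d * Real.log (H.trace / d) := by
  have hd0 : (0:ℝ) < d := by exact_mod_cast hd
  have hpos : ∀ i, 0 < hH.1.eigenvalues i := hH.eigenvalues_pos
  rw [det_eq_prod_eigs hH.1, Real.log_prod (fun i _ => ne_of_gt (hpos i))]
  have hJ := (strictConcaveOn_log_Ioi.concaveOn).le_map_sum
    (t := Finset.univ) (w := fun _ : Fin d => 1/(d:ℝ)) (p := fun i => hH.1.eigenvalues i)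
    (fun i _ => by positivity)
    (by rw [Finset.sum_const]; simp; field_simp)
    (fun i _ => Set.mem_Ioi.mpr (hpos i))
  simp only [smul_eq_mul] at hJ
  rw [trace_eq_sum_eigs hH.1]
  have h1 : ∑ i, (1/(d:ℝ)) * Real.log (hH.1.eigenvalues i)
      = (1/(d:ℝ)) * ∑ i, Real.log (hH.1.eigenvalues i) := by rw [Finset.mul_sum]
  have h2 : ∑ i, (1/(d:ℝ)) * hH.1.eigenvalues i
      = (∑ i, hH.1.eigenvalues i) / d := by rw [← Finset.mul_sum]; ring
  rw [h1, h2] at hJ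
  calc ∑ i, Real.log (hH.1.eigenvalues i)
      = d * ((1/(d:ℝ)) * ∑ i, Real.log (hH.1.eigenvalues i)) := by field_simp
    _ ≤ d * Real.log ((∑ i, hH.1.eigenvalues i) / d) :=
        mul_le_mul_of_nonneg_left hJ (le_of_lt hd0)

lemma potential {T d M : ℕ} (hd : 1 ≤ d) {β Cx : ℝ} (hβ1 : 1 ≤ β) (hβC : Cx^2 ≤ β)
    (hMT : M ≤ T) (x : ℕ → Fin d → ℝ) (hx : ∀ m < M, x m ⬝ᵥ x m ≤ Cx^2) :
    ∑ m ∈ Finset.range M, x m ⬝ᵥ (designMatrix β x m)⁻¹ *ᵥ x m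
      ≤ 2 * d * (Real.log (β + T * Cx^2 / d) - Real.log β) := by
  have hβ : (0:ℝ) < β := lt_of_lt_of_le one_pos hβ1
  have hd0 : (0:ℝ) < d := by exact_mod_cast hd
  have hCx2 : (0:ℝ) ≤ Cx^2 := sq_nonneg Cx
  set w : ℕ → ℝ := fun m => x m ⬝ᵥ (designMatrix β x m)⁻¹ *ᵥ x m with hw
  have step1 : ∑ m ∈ Finset.range M, w m
      ≤ ∑ m ∈ Finset.range M, 2 * Real.log (1 + w m) :=
    Finset.sum_le_sum fun m hm => half_le_log (w_nonneg hβ x m)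
      (w_le_one hβ1 hβC x m (hx m (Finset.mem_range.mp hm)))
  have step2 : ∑ m ∈ Finset.range M, 2 * Real.log (1 + w m)
      = 2 * (Real.log (designMatrix β x M).det - d * Real.log β) := by
    rw [logdet_eq hβ x M, ← Finset.mul_sum]; ring
  have htr : (designMatrix β x M).trace / d ≤ β + T * Cx^2 / d := by
    rw [trace_eq]
    have hs : ∑ s ∈ Finset.range M, (x s ⬝ᵥ x s) ≤ M * Cx^2 := by
      calc ∑ s ∈ Finset.range M, (x s ⬝ᵥ x s) ≤ ∑ s ∈ Finset.range M, Cx^2 :=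
            Finset.sum_le_sum fun s hs => hx s (Finset.mem_range.mp hs)
        _ = M * Cx^2 := by rw [Finset.sum_const, Finset.card_range]; ring
    have hMT' : (M:ℝ) * Cx^2 ≤ T * Cx^2 :=
      mul_le_mul_of_nonneg_right (by exact_mod_cast hMT) hCx2
    rw [div_le_iff₀ hd0]
    have hexp : (β + T*Cx^2/d)*d = β*d + T*Cx^2 := by field_simp
    rw [hexp]
    linarith
  have htrpos : 0 < (designMatrix β x M).trace / d := by
    rw [trace_eq]
    have : (0:ℝ) ≤ ∑ s ∈ Finset.range M, (x s ⬝ᵥ x s) :=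
      Finset.sum_nonneg fun s _ => Finset.sum_nonneg fun i _ => mul_self_nonneg _
    positivity
  have step3 : Real.log (designMatrix β x M).det ≤ d * Real.log (β + T * Cx^2 / d) := by
    calc Real.log (designMatrix β x M).det
        ≤ d * Real.log ((designMatrix β x M).trace / d) := logdet_le_trace hd (pd hβ x M)
      _ ≤ d * Real.log (β + T * Cx^2 / d) :=
          mul_le_mul_of_nonneg_left (Real.log_le_log htrpos htr) (le_of_lt hd0)
  calc ∑ m ∈ Finset.range M, w m ≤ 2 * (Real.log (designMatrix β x M).det - d * Real.log β) := by
        rw [← step2]; exact step1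
    _ ≤ 2 * (d * Real.log (β + T * Cx^2 / d) - d * Real.log β) := by linarith
    _ = 2 * d * (Real.log (β + T * Cx^2 / d) - Real.log β) := by ring

/-- Deterministic core of Theorem 1 (regret bound of μLinUCB): frames
`{1, …, T}` are partitioned into regular sampling frames `R`, non-sampling
frames `N` and forced sampling frames `F`; the `M = |R ∪ F|` sampling frames,
enumerated in increasing order by `idx`, have contexts `x_1, …, x_M` (written
0-indexed: the `m`-th sample uses `A_m = βI + Σ_{s<m} x_s x_sᵀ`).  Under the
per-frame regret bounds (i)–(iii), the total regret is at most
`(2 + 3T^μ)·α√(2Td(log(β + TC_x²/d) − log β)) + T^{1−μ}·Δ_max`. -/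
theorem stmt_10 {T d : ℕ} (hT : 1 ≤ T) (hd : 1 ≤ d)
    (α Cx β Δmax μ : ℝ) (hα : 0 ≤ α) (hCx : 0 < Cx)
    (hβ : β ≥ max 1 (Cx ^ 2)) (hΔ : 0 ≤ Δmax) (hμ : μ ∈ Set.Ioo (0 : ℝ) 1)
    (R N F : Finset ℕ)
    (hRN : Disjoint R N) (hRF : Disjoint R F) (hNF : Disjoint N F)
    (hunion : R ∪ N ∪ F = Finset.Icc 1 T)
    (M : ℕ) (hM : (R ∪ F).card = M) (hMT : M ≤ T)
    (x : ℕ → Fin d → ℝ) (hx : ∀ m < M, Real.sqrt (x m ⬝ᵥ x m) ≤ Cx)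
    (idx : Fin M → ℕ) (hmono : StrictMono idx)
    (hrange : ∀ t, t ∈ R ∪ F ↔ ∃ m, idx m = t)
    (r : ℕ → ℝ) (hr0 : ∀ t ∈ Finset.Icc 1 T, 0 ≤ r t)
    -- (i) regular sampling frames
    (hR : ∀ m : Fin M, idx m ∈ R →
      r (idx m) ≤ 2 * α * Real.sqrt
        (x m ⬝ᵥ (designMatrix β x m)⁻¹.mulVec (x m)))
    -- (ii) non-sampling frames
    (σ : ℕ → Fin M)
    (hσcard : ∀ m : Fin M, ((N.filter fun t => σ t = m).card : ℝ) ≤ (T : ℝ) ^ μ)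
    (hN : ∀ t ∈ N, r t ≤ 3 * α * Real.sqrt
      (x (σ t) ⬝ᵥ (designMatrix β x (σ t))⁻¹.mulVec (x (σ t))))
    -- (iii) forced sampling frames
    (hF : ∀ t ∈ F, r t ≤ Δmax)
    (hFcard : (F.card : ℝ) ≤ (T : ℝ) ^ (1 - μ)) :
    ∑ t ∈ Finset.Icc 1 T, r t ≤
      (2 + 3 * (T : ℝ) ^ μ) *
          (α * Real.sqrt (2 * T * d * (Real.log (β + T * Cx ^ 2 / d) - Real.log β))) +
        (T : ℝ) ^ (1 - μ) * Δmax := by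
  have hβ1 : (1:ℝ) ≤ β := le_trans (le_max_left _ _) hβ
  have hβC : Cx^2 ≤ β := le_trans (le_max_right _ _) hβ
  have hβ0 : (0:ℝ) < β := lt_of_lt_of_le one_pos hβ1
  set w : ℕ → ℝ := fun m => x m ⬝ᵥ (designMatrix β x m)⁻¹ *ᵥ x m with hwdef
  have hw0 : ∀ m, 0 ≤ w m := fun m => w_nonneg hβ0 x m
  have hx' : ∀ m < M, x m ⬝ᵥ x m ≤ Cx^2 := by
    intro m hm
    have h1 := hx m hm
    have h2 : 0 ≤ x m ⬝ᵥ x m := Finset.sum_nonneg fun i _ => mul_self_nonneg _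
    nlinarith [Real.sq_sqrt h2, Real.sqrt_nonneg (x m ⬝ᵥ x m)]
  set S : ℝ := ∑ m : Fin M, Real.sqrt (w m) with hSdef
  have hS0 : 0 ≤ S := Finset.sum_nonneg fun m _ => Real.sqrt_nonneg _
  set L : ℝ := Real.log (β + T * Cx ^ 2 / d) - Real.log β with hLdef
  set G : ℝ := Real.sqrt (2 * T * d * L) with hGdef
  -- Cauchy–Schwarz + elliptic potential
  have hSG : S ≤ G := by
    have hcs : S^2 ≤ (M : ℝ) * ∑ m : Fin M, w (m : ℕ) := by
      have := sq_sum_le_card_mul_sum_sq (s := (Finset.univ : Finset (Fin M)))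
        (f := fun m => Real.sqrt (w (m : ℕ)))
      simp only [Finset.card_univ, Fintype.card_fin] at this
      calc S^2 ≤ (M : ℝ) * ∑ m : Fin M, (Real.sqrt (w (m : ℕ)))^2 := this
        _ = (M : ℝ) * ∑ m : Fin M, w (m : ℕ) := by
            congr 1
            exact Finset.sum_congr rfl fun m _ => Real.sq_sqrt (hw0 m)
    have hpot : ∑ m : Fin M, w (m : ℕ) ≤ 2 * d * L := by
      rw [← Finset.sum_range (fun m => w m)]
      exact potential hd hβ1 hβC hMT x hx'
    have hsum0 : 0 ≤ ∑ m : Fin M, w (m : ℕ) :=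
      Finset.sum_nonneg fun m _ => hw0 m
    have h2 : S^2 ≤ 2 * T * d * L := by
      calc S^2 ≤ (M : ℝ) * ∑ m : Fin M, w (m : ℕ) := hcs
        _ ≤ (T : ℝ) * ∑ m : Fin M, w (m : ℕ) :=
            mul_le_mul_of_nonneg_right (by exact_mod_cast hMT) hsum0
        _ ≤ (T : ℝ) * (2 * d * L) := by
            refine mul_le_mul_of_nonneg_left hpot (by positivity)
        _ = 2 * T * d * L := by ring
    exact Real.le_sqrt_of_sq_le h2
  -- sum over R
  have hRsum : ∑ t ∈ R, r t ≤ 2 * α * S := by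
    classical
    have hinj : Function.Injective idx := hmono.injective
    have hRim : R = Finset.image idx (Finset.univ.filter fun m => idx m ∈ R) := by
      ext t
      simp only [Finset.mem_image, Finset.mem_filter, Finset.mem_univ, true_and]
      constructor
      · intro ht
        obtain ⟨m, hm⟩ := (hrange t).mp (Finset.mem_union_left _ ht)
        exact ⟨m, by rw [hm]; exact ht, hm⟩
      · rintro ⟨m, hm, rfl⟩; exact hm
    rw [hRim, Finset.sum_image (fun a _ b _ h => hinj h)]
    calc ∑ m ∈ Finset.univ.filter (fun m => idx m ∈ R), r (idx m)
        ≤ ∑ m ∈ Finset.univ.filter (fun m => idx m ∈ R),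
            2 * α * Real.sqrt (w (m : ℕ)) :=
          Finset.sum_le_sum fun m hm => hR m (Finset.mem_filter.mp hm).2
      _ ≤ ∑ m : Fin M, 2 * α * Real.sqrt (w (m : ℕ)) :=
          Finset.sum_le_sum_of_subset_of_nonneg (Finset.filter_subset _ _)
            (fun m _ _ => by positivity)
      _ = 2 * α * S := by rw [hSdef, Finset.mul_sum]
  -- sum over N
  have hNsum : ∑ t ∈ N, r t ≤ 3 * (T : ℝ) ^ μ * α * S := by
    classical
    have h1 : ∑ t ∈ N, r t ≤ ∑ t ∈ N, 3 * α * Real.sqrt (w (σ t : ℕ)) :=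
      Finset.sum_le_sum fun t ht => hN t ht
    have h2 : ∑ t ∈ N, 3 * α * Real.sqrt (w (σ t : ℕ))
        = ∑ m : Fin M, ∑ t ∈ N.filter (fun t => σ t = m),
            3 * α * Real.sqrt (w (σ t : ℕ)) :=
      (Finset.sum_fiberwise_of_maps_to (fun t _ => Finset.mem_univ (σ t)) _).symm
    have h3 : ∀ m : Fin M, ∑ t ∈ N.filter (fun t => σ t = m),
        3 * α * Real.sqrt (w (σ t : ℕ))
        ≤ (T : ℝ) ^ μ * (3 * α * Real.sqrt (w (m : ℕ))) := by
      intro m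
      have : ∑ t ∈ N.filter (fun t => σ t = m), 3 * α * Real.sqrt (w (σ t : ℕ))
          = ((N.filter (fun t => σ t = m)).card : ℝ) * (3 * α * Real.sqrt (w (m : ℕ))) := by
        rw [Finset.sum_congr rfl (fun t ht => by
          rw [(Finset.mem_filter.mp ht).2]), Finset.sum_const, nsmul_eq_mul]
      rw [this]
      exact mul_le_mul_of_nonneg_right (hσcard m) (by positivity)
    calc ∑ t ∈ N, r t ≤ ∑ t ∈ N, 3 * α * Real.sqrt (w (σ t : ℕ)) := h1
      _ = ∑ m : Fin M, ∑ t ∈ N.filter (fun t => σ t = m),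
            3 * α * Real.sqrt (w (σ t : ℕ)) := h2
      _ ≤ ∑ m : Fin M, (T : ℝ) ^ μ * (3 * α * Real.sqrt (w (m : ℕ))) :=
          Finset.sum_le_sum fun m _ => h3 m
      _ = 3 * (T : ℝ) ^ μ * α * S := by
          rw [hSdef, Finset.mul_sum]
          exact Finset.sum_congr rfl fun m _ => by ring
  -- sum over F
  have hFsum : ∑ t ∈ F, r t ≤ (T : ℝ) ^ (1 - μ) * Δmax := by
    calc ∑ t ∈ F, r t ≤ ∑ t ∈ F, Δmax := Finset.sum_le_sum hF
      _ = (F.card : ℝ) * Δmax := by rw [Finset.sum_const, nsmul_eq_mul]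
      _ ≤ (T : ℝ) ^ (1 - μ) * Δmax := mul_le_mul_of_nonneg_right hFcard hΔ
  -- combine
  have hsplit : ∑ t ∈ Finset.Icc 1 T, r t = ∑ t ∈ R, r t + ∑ t ∈ N, r t + ∑ t ∈ F, r t := by
    rw [← hunion, Finset.sum_union (by
      rw [Finset.disjoint_union_left]; exact ⟨hRF, hNF⟩), Finset.sum_union hRN]
  have hT0 : (0:ℝ) ≤ (T : ℝ) ^ μ := Real.rpow_nonneg (Nat.cast_nonneg T) μ
  have hαS : α * S ≤ α * G := mul_le_mul_of_nonneg_left hSG hα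
  have hG0 : 0 ≤ G := Real.sqrt_nonneg _
  calc ∑ t ∈ Finset.Icc 1 T, r t
      = ∑ t ∈ R, r t + ∑ t ∈ N, r t + ∑ t ∈ F, r t := hsplit
    _ ≤ 2 * α * S + 3 * (T : ℝ) ^ μ * α * S + (T : ℝ) ^ (1 - μ) * Δmax := by
        linarith
    _ = (2 + 3 * (T : ℝ) ^ μ) * (α * S) + (T : ℝ) ^ (1 - μ) * Δmax := by ring
    _ ≤ (2 + 3 * (T : ℝ) ^ μ) * (α * G) + (T : ℝ) ^ (1 - μ) * Δmax := by
        have : (0:ℝ) ≤ 2 + 3 * (T : ℝ) ^ μ := by positivity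
        nlinarith
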